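/- Let C = ⟨v_1, …, v_k⟩ be a convex polygonal chain (all turns in the same direction) whose total turning angle is strictly less than 180°. Then the ray from v_1 through v_2 and the ray from v_k through v_{k−1} intersect, i.e., C is simplifiable. -/

import Mathlib

open EuclideanGeometry Metric Set
open scoped RealInnerProductSpace

noncomputable section

/-- The plane. -/
abbrev Pt := EuclideanSpace ℝ (Fin 2)

/-- The union of the segments of an (open) polygonal chain with vertex list `l`. -/
def segChain (l : List Pt) : Set Pt := ⋃ p ∈ l.zip l.tail, segment ℝ p.1 p.2

/-- The length of a polygonal chain. -/
def chainLength (l : List Pt) : ℝ := ((l.zip l.tail).map fun z => dist z.1 z.2).sum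

/-- Cyclic indexing into a vertex list. -/
def cyclicGet (l : List Pt) (n : ℕ) : Pt := l.getD (n % l.length) 0

/-- The `i`-th edge (a closed segment) of the closed polygonal curve with vertex list `l`. -/
def edgeSeg (l : List Pt) (i : ℕ) : Set Pt := segment ℝ (cyclicGet l i) (cyclicGet l (i + 1))

/-- The closed polygonal curve with vertex list `l`. -/
def closedChain (l : List Pt) : Set Pt := ⋃ i ∈ Finset.range l.length, edgeSeg l i

/-- `v` is a point of local non-convexity of `R` (interior angle exceeding 180°). -/
def ReflexAt (R : Set Pt) (v : Pt) : Prop :=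
  ∀ ε > 0, ∃ p ∈ R ∩ ball v ε, ∃ q ∈ R ∩ ball v ε, ¬ segment ℝ p q ⊆ R

/-- A simple polygon: a compact connected closed planar region bounded by a simple closed
polygonal curve through its vertices, any two edges meeting only in shared endpoints. -/
structure SimplePolygon where
  verts : List Pt
  region : Set Pt
  three_le : 3 ≤ verts.length
  nodup : verts.Nodup
  closed' : IsClosed region
  compact' : IsCompact region
  connected' : IsConnected region
  boundary' : frontier region = closedChain verts
  simple' : ∀ i j, i < verts.length → j < verts.length → i ≠ j →
    edgeSeg verts i ∩ edgeSeg verts j ⊆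
      ({cyclicGet verts i, cyclicGet verts (i + 1)} ∩
        {cyclicGet verts j, cyclicGet verts (j + 1)} : Set Pt)

/-- A reflex vertex: a vertex whose interior angle exceeds 180°. -/
def SimplePolygon.IsReflex (P : SimplePolygon) (v : Pt) : Prop :=
  v ∈ P.verts ∧ ReflexAt P.region v

/-- A convex vertex: a vertex that is not reflex. -/
def SimplePolygon.IsConvexVtx (P : SimplePolygon) (v : Pt) : Prop :=
  v ∈ P.verts ∧ ¬ ReflexAt P.region v

/-- `P'` subsumes `P`: `P ⊆ P'` and both polygons have the same reflex vertices
(at the same positions). -/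
def Subsumes (P' P : SimplePolygon) : Prop :=
  P.region ⊆ P'.region ∧ ∀ v, P.IsReflex v ↔ P'.IsReflex v

/-- `l` is a polygonal path from `p` to `q` staying inside the region `R`. -/
def IsPathIn (R : Set Pt) (p q : Pt) (l : List Pt) : Prop :=
  l.head? = some p ∧ l.getLast? = some q ∧ segChain l ⊆ R ∧ p ∈ R ∧ q ∈ R

/-- `l` is a geodesic (shortest) path from `p` to `q` inside `R`.  (In a polygon every
shortest path is polygonal, so it suffices to compare against polygonal competitors.) -/
def IsGeodesic (R : Set Pt) (p q : Pt) (l : List Pt) : Prop :=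
  IsPathIn R p q l ∧ ∀ l', IsPathIn R p q l' → chainLength l ≤ chainLength l'
/-- The ray from `p` in direction `d`. -/
def ray (p d : Pt) : Set Pt := {x | ∃ t : ℝ, 0 ≤ t ∧ x = p + t • d}

/-- The unit vector from `p` towards `q`. -/
def udir (p q : Pt) : Pt := ‖q - p‖⁻¹ • (q - p)

/-- A chain is hull-honest if it is completely contained in the boundary of its convex hull. -/
def HullHonest (l : List Pt) : Prop :=
  segChain l ⊆ frontier (convexHull ℝ {x | x ∈ l})

/-- The ray from the first vertex of `l` through its second vertex intersects the ray from
the last vertex of `l` through its second-to-last vertex. -/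
def EndRaysMeet (l : List Pt) : Prop :=
  (ray (l.getD 0 0) (l.getD 1 0 - l.getD 0 0) ∩
    ray (l.getD (l.length - 1) 0) (l.getD (l.length - 2) 0 - l.getD (l.length - 1) 0)).Nonempty

/-- A chain is simplifiable if it is hull-honest and its two end rays intersect. -/
def Simplifiable (l : List Pt) : Prop :=
  2 ≤ l.length ∧ HullHonest l ∧ EndRaysMeet l

/-- The planar cross product of two vectors. -/
def cross2 (u v : Pt) : ℝ := u 0 * v 1 - u 1 * v 0

/-- The total turning angle of a chain: the sum of the exterior turning angles at its
interior vertices. -/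
def turningAngle (l : List Pt) : ℝ :=
  ∑ i ∈ Finset.range (l.length - 2),
    (Real.pi - EuclideanGeometry.angle (l.getD i 0) (l.getD (i + 1) 0) (l.getD (i + 2) 0))

/-- A convex polygonal chain: a simple chain with nondegenerate edges in which consecutive
edges always turn in the same rotational direction. -/
def ConvexChain (l : List Pt) : Prop :=
  l.Nodup ∧ 2 ≤ l.length ∧
  ((∀ i, i + 2 < l.length →
      0 ≤ cross2 (l.getD (i + 1) 0 - l.getD i 0) (l.getD (i + 2) 0 - l.getD (i + 1) 0)) ∨
    (∀ i, i + 2 < l.length →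
      cross2 (l.getD (i + 1) 0 - l.getD i 0) (l.getD (i + 2) 0 - l.getD (i + 1) 0) ≤ 0))
/-! ### Auxiliary machinery for `convex_chain_simplifiable` -/

namespace CCAux

/-- Rotated-by-90° vector. -/
def perp (u : Pt) : Pt := WithLp.toLp 2 ![-(u 1), u 0]

@[simp] lemma perp_zero (u : Pt) : perp u 0 = -(u 1) := rfl
@[simp] lemma perp_one (u : Pt) : perp u 1 = u 0 := rfl

/-- Rotation by angle `θ` with orientation `e` (`e = ±1`). -/
def rot (e θ : ℝ) (u : Pt) : Pt := Real.cos θ • u + (e * Real.sin θ) • perp u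

@[simp] lemma rot_zero_coord (e θ : ℝ) (u : Pt) :
    rot e θ u 0 = Real.cos θ * u 0 - e * Real.sin θ * u 1 := by
  simp [rot, PiLp.add_apply, PiLp.smul_apply, smul_eq_mul]; ring

@[simp] lemma rot_one_coord (e θ : ℝ) (u : Pt) :
    rot e θ u 1 = Real.cos θ * u 1 + e * Real.sin θ * u 0 := by
  simp [rot, PiLp.add_apply, PiLp.smul_apply, smul_eq_mul]

lemma rot_zero (e : ℝ) (u : Pt) : rot e 0 u = u := by
  ext i; fin_cases i <;> simp

lemma rot_add (e θ φ : ℝ) (he : e = 1 ∨ e = -1) (u : Pt) :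
    rot e φ (rot e θ u) = rot e (θ + φ) u := by
  ext i; rcases he with rfl | rfl <;> fin_cases i <;>
    simp [Real.cos_add, Real.sin_add] <;> ring

lemma rot_smul (e θ c : ℝ) (u : Pt) : rot e θ (c • u) = c • rot e θ u := by
  ext i; fin_cases i <;> simp [PiLp.smul_apply, smul_eq_mul] <;> ring

lemma cross2_smul_smul (a b : ℝ) (u v : Pt) :
    cross2 (a • u) (b • v) = a * b * cross2 u v := by
  simp [cross2, PiLp.smul_apply, smul_eq_mul]; ring

lemma cross2_rot (e α β : ℝ) (he : e = 1 ∨ e = -1) (u : Pt) :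
    cross2 (rot e α u) (rot e β u) = e * Real.sin (β - α) * (u 0 ^ 2 + u 1 ^ 2) := by
  rcases he with rfl | rfl <;> simp [cross2, Real.sin_sub] <;> ring

lemma cross2_add_left (u v w : Pt) : cross2 (u + v) w = cross2 u w + cross2 v w := by
  simp [cross2, PiLp.add_apply]; ring

lemma cross2_zero_left (w : Pt) : cross2 0 w = 0 := by
  simp [cross2]

lemma cross2_sub_right (u v w : Pt) : cross2 u (v - w) = cross2 u v - cross2 u w := by
  simp [cross2, PiLp.sub_apply]; ring

lemma cross2_anti (u v : Pt) : cross2 u v = -cross2 v u := by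
  simp [cross2]; ring

lemma cross2_sum_left {α : Type*} (s : Finset α) (f : α → Pt) (w : Pt) :
    cross2 (∑ j ∈ s, f j) w = ∑ j ∈ s, cross2 (f j) w := by
  classical
  induction s using Finset.induction_on with
  | empty => simp [cross2_zero_left]
  | insert a s' hx ih => simp [Finset.sum_insert hx, cross2_add_left, ih]

lemma norm_sq_coord (u : Pt) : ‖u‖ ^ 2 = u 0 ^ 2 + u 1 ^ 2 := by
  rw [EuclideanSpace.norm_eq, Real.sq_sqrt (by positivity), Fin.sum_univ_two, Real.norm_eq_abs,
    Real.norm_eq_abs, sq_abs, sq_abs]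

lemma coordsq_pos {u : Pt} (hu : u ≠ 0) : 0 < u 0 ^ 2 + u 1 ^ 2 := by
  rw [← norm_sq_coord]
  exact pow_pos (norm_pos_iff.mpr hu) 2

/-- Polar representation of a vector relative to another, with orientation `e`. -/
lemma rep (e : ℝ) (he : e = 1 ∨ e = -1) (u v : Pt) (hu : u ≠ 0) (hv : v ≠ 0)
    (hc : 0 ≤ e * cross2 u v) :
    ∃ ρ : ℝ, 0 < ρ ∧ v = ρ • rot e (InnerProductGeometry.angle u v) u := by
  have hnu : (0:ℝ) < ‖u‖ := norm_pos_iff.mpr hu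
  have hnv : (0:ℝ) < ‖v‖ := norm_pos_iff.mpr hv
  have he2 : e * e = 1 := by rcases he with rfl | rfl <;> norm_num
  refine ⟨‖v‖/‖u‖, by positivity, ?_⟩
  set φ := InnerProductGeometry.angle u v with hφ
  have hin : inner ℝ u v = u 0 * v 0 + u 1 * v 1 := by
    simp [PiLp.inner_apply, RCLike.inner_apply, Fin.sum_univ_two]; ring
  have hcos : Real.cos φ * (‖u‖ * ‖v‖) = u 0 * v 0 + u 1 * v 1 := by
    rw [hφ, InnerProductGeometry.cos_angle, div_mul_cancel₀ _ (by positivity), hin]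
  have hs0 : 0 ≤ Real.sin φ :=
    Real.sin_nonneg_of_nonneg_of_le_pi (InnerProductGeometry.angle_nonneg u v)
      (InnerProductGeometry.angle_le_pi u v)
  have hsin : Real.sin φ * (‖u‖ * ‖v‖) = e * (u 0 * v 1 - u 1 * v 0) := by
    have hsq : (Real.sin φ * (‖u‖ * ‖v‖))^2 = (e * (u 0 * v 1 - u 1 * v 0))^2 := by
      have hs2 : Real.sin φ ^ 2 = 1 - Real.cos φ ^ 2 := Real.sin_sq φ
      have h1 : (Real.sin φ * (‖u‖ * ‖v‖))^2
          = ‖u‖^2 * ‖v‖^2 - (Real.cos φ * (‖u‖ * ‖v‖))^2 := by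
        rw [mul_pow, hs2]; ring
      rw [h1, hcos, norm_sq_coord, norm_sq_coord]
      have h2 : e^2 = 1 := by rcases he with rfl | rfl <;> norm_num
      rw [mul_pow, h2]; ring
    have habs : |Real.sin φ * (‖u‖ * ‖v‖)| = |e * (u 0 * v 1 - u 1 * v 0)| := by
      rw [← Real.sqrt_sq_eq_abs, ← Real.sqrt_sq_eq_abs, hsq]
    have hc' : 0 ≤ e * (u 0 * v 1 - u 1 * v 0) := by simpa [cross2] using hc
    rwa [abs_of_nonneg (by positivity), abs_of_nonneg hc'] at habs
  have hnu2 : ‖u‖^2 = u 0^2 + u 1^2 := norm_sq_coord u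
  ext i
  fin_cases i
  · show v 0 = ((‖v‖/‖u‖ : ℝ) • rot e φ u) 0
    have hv0 : ‖u‖^2 * v 0 = ‖u‖*‖v‖*(Real.cos φ * u 0 - e * Real.sin φ * u 1) := by
      linear_combination v 0 * hnu2 - u 0 * hcos + (e * u 1) * hsin
        + (u 1 * (u 0 * v 1 - u 1 * v 0)) * he2
    rw [PiLp.smul_apply, rot_zero_coord, smul_eq_mul]
    apply mul_left_cancel₀ (pow_ne_zero 2 hnu.ne')
    rw [hv0]; field_simp
  · show v 1 = ((‖v‖/‖u‖ : ℝ) • rot e φ u) 1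
    have hv1 : ‖u‖^2 * v 1 = ‖u‖*‖v‖*(Real.cos φ * u 1 + e * Real.sin φ * u 0) := by
      linear_combination v 1 * hnu2 - u 1 * hcos - (e * u 0) * hsin
        - (u 0 * (u 0 * v 1 - u 1 * v 0)) * he2
    rw [PiLp.smul_apply, rot_one_coord, smul_eq_mul]
    apply mul_left_cancel₀ (pow_ne_zero 2 hnu.ne')
    rw [hv1]; field_simp

end CCAux
namespace CCAux

lemma CC_rep (e : ℝ) (he : e = 1 ∨ e = -1) (k : ℕ) (v : ℕ → Pt)
    (hd : ∀ i, i + 1 < k → v (i+1) - v i ≠ 0)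
    (hcr : ∀ i, i + 2 < k → 0 ≤ e * cross2 (v (i+1) - v i) (v (i+2) - v (i+1)))
    (ht : ∑ m ∈ Finset.range (k-2),
      (Real.pi - EuclideanGeometry.angle (v m) (v (m+1)) (v (m+2))) < Real.pi) :
    ∃ Θ : ℕ → ℝ, Θ 0 = 0 ∧ Monotone Θ ∧ Θ (k-2) < Real.pi ∧
      ∀ j, j + 1 < k → ∃ ρ : ℝ, 0 < ρ ∧ v (j+1) - v j = ρ • rot e (Θ j) (v 1 - v 0) := by
  set φ : ℕ → ℝ := fun m => Real.pi - EuclideanGeometry.angle (v m) (v (m+1)) (v (m+2)) with hφdef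
  have hφ0 : ∀ m, 0 ≤ φ m := fun m =>
    sub_nonneg.mpr (EuclideanGeometry.angle_le_pi _ _ _)
  refine ⟨fun j => ∑ m ∈ Finset.range j, φ m, by simp, ?_, ht, ?_⟩
  · intro a b hab
    exact Finset.sum_le_sum_of_subset_of_nonneg
      (Finset.range_subset_range.mpr hab) (fun m _ _ => hφ0 m)
  · intro j
    induction j with
    | zero =>
      intro h
      exact ⟨1, one_pos, by simp [rot_zero]⟩
    | succ j ih =>
      intro h
      obtain ⟨ρ, hρ, hrep⟩ := ih (by omega)
      have hu : v (j+1) - v j ≠ 0 := hd j (by omega)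
      have hw : v (j+2) - v (j+1) ≠ 0 := hd (j+1) (by omega)
      obtain ⟨σ, hσ, h2⟩ := rep e he _ _ hu hw (hcr j (by omega))
      have hang : InnerProductGeometry.angle (v (j+1) - v j) (v (j+2) - v (j+1)) = φ j := by
        have : EuclideanGeometry.angle (v j) (v (j+1)) (v (j+2))
            = Real.pi - InnerProductGeometry.angle (v (j+1) - v j) (v (j+2) - v (j+1)) := by
          rw [EuclideanGeometry.angle, vsub_eq_sub, vsub_eq_sub, ← neg_sub (v (j+1)) (v j),
            InnerProductGeometry.angle_neg_left]
        simp only [hφdef, this]; ring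
      refine ⟨σ * ρ, by positivity, ?_⟩
      show v (j+1+1) - v (j+1) = (σ * ρ) • rot e (∑ m ∈ Finset.range (j+1), φ m) (v 1 - v 0)
      rw [Finset.sum_range_succ]
      calc v (j+1+1) - v (j+1)
          = σ • rot e (φ j) (v (j+1) - v j) := by rw [← hang]; exact h2
        _ = σ • rot e (φ j) (ρ • rot e (∑ m ∈ Finset.range j, φ m) (v 1 - v 0)) := by
            rw [hrep]
        _ = (σ * ρ) • rot e ((∑ m ∈ Finset.range j, φ m) + φ j) (v 1 - v 0) := by
            rw [rot_smul, rot_add e _ _ he, smul_smul]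

end CCAux
namespace CCAux

lemma cross2_add_right (u v w : Pt) : cross2 u (v + w) = cross2 u v + cross2 u w := by
  simp [cross2, PiLp.add_apply]; ring

lemma cross2_zero_right (u : Pt) : cross2 u 0 = 0 := by simp [cross2]

lemma cross2_smul_right (c : ℝ) (u v : Pt) : cross2 u (c • v) = c * cross2 u v := by
  simp [cross2, PiLp.smul_apply, smul_eq_mul]; ring

lemma cross2_sum_right {α : Type*} (s : Finset α) (f : α → Pt) (w : Pt) :
    cross2 w (∑ j ∈ s, f j) = ∑ j ∈ s, cross2 w (f j) := by
  classical
  induction s using Finset.induction_on with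
  | empty => simp [cross2_zero_right]
  | insert a s' hx ih => simp [Finset.sum_insert hx, cross2_add_right, ih]

lemma CC_cross (e : ℝ) (he : e = 1 ∨ e = -1) (k : ℕ) (v : ℕ → Pt)
    (hd : ∀ i, i + 1 < k → v (i+1) - v i ≠ 0)
    (hcr : ∀ i, i + 2 < k → 0 ≤ e * cross2 (v (i+1) - v i) (v (i+2) - v (i+1)))
    (ht : ∑ m ∈ Finset.range (k-2),
      (Real.pi - EuclideanGeometry.angle (v m) (v (m+1)) (v (m+2))) < Real.pi) :
    ∀ i j, i ≤ j → j + 1 < k → 0 ≤ e * cross2 (v (i+1) - v i) (v (j+1) - v j) := by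
  obtain ⟨Θ, hΘ0, hmono, hbd, hrep⟩ := CC_rep e he k v hd hcr ht
  intro i j hij hjk
  obtain ⟨ρi, hρi, hi⟩ := hrep i (by omega)
  obtain ⟨ρj, hρj, hj⟩ := hrep j hjk
  have hq : 0 < (v 1 - v 0) 0 ^ 2 + (v 1 - v 0) 1 ^ 2 := coordsq_pos (hd 0 (by omega))
  have hsin : 0 ≤ Real.sin (Θ j - Θ i) := by
    apply Real.sin_nonneg_of_nonneg_of_le_pi (sub_nonneg.mpr (hmono hij))
    have h1 : Θ 0 ≤ Θ i := hmono (Nat.zero_le i)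
    have h2 : Θ j ≤ Θ (k-2) := hmono (by omega)
    rw [hΘ0] at h1
    linarith
  rw [hi, hj, cross2_smul_smul, cross2_rot e _ _ he]
  have hE : e * (ρi * ρj * (e * Real.sin (Θ j - Θ i) * ((v 1 - v 0) 0 ^ 2 + (v 1 - v 0) 1 ^ 2)))
      = ρi * ρj * (Real.sin (Θ j - Θ i) * ((v 1 - v 0) 0 ^ 2 + (v 1 - v 0) 1 ^ 2)) := by
    rcases he with rfl | rfl <;> ring
  rw [hE]
  exact mul_nonneg (mul_nonneg hρi.le hρj.le) (mul_nonneg hsin hq.le)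

lemma CC_rays (e : ℝ) (he : e = 1 ∨ e = -1) (K : ℕ) (v : ℕ → Pt)
    (hd : ∀ i, i + 1 < K + 2 → v (i+1) - v i ≠ 0)
    (hcr : ∀ i, i + 2 < K + 2 → 0 ≤ e * cross2 (v (i+1) - v i) (v (i+2) - v (i+1)))
    (ht : ∑ m ∈ Finset.range K,
      (Real.pi - EuclideanGeometry.angle (v m) (v (m+1)) (v (m+2))) < Real.pi) :
    ∃ t s : ℝ, 0 ≤ t ∧ 0 ≤ s ∧
      v 0 + t • (v 1 - v 0) = v (K+1) + s • (v K - v (K+1)) := by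
  have hcross := CC_cross e he (K+2) v hd hcr ht
  obtain ⟨Θ, hΘ0, hmono, hbd, hrep⟩ := CC_rep e he (K+2) v hd hcr ht
  have ha : v 1 - v 0 ≠ 0 := hd 0 (by omega)
  have hq : 0 < (v 1 - v 0) 0 ^ 2 + (v 1 - v 0) 1 ^ 2 := coordsq_pos ha
  have hw : v (K+1) - v 0 = ∑ j ∈ Finset.range (K+1), (v (j+1) - v j) :=
    (Finset.sum_range_sub v (K+1)).symm
  have hD0 : 0 ≤ e * cross2 (v 1 - v 0) (v (K+1) - v K) :=
    hcross 0 K (Nat.zero_le _) (by omega)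
  rcases hD0.lt_or_eq with hD | hD
  · -- nondegenerate case
    set aa := v 1 - v 0 with haa
    set bb := v (K+1) - v K with hbb
    set ww := v (K+1) - v 0 with hww
    set D := e * cross2 aa bb with hDdef
    have hT1 : 0 ≤ e * cross2 ww bb := by
      rw [hw, cross2_sum_left, Finset.mul_sum]
      apply Finset.sum_nonneg
      intro j hj
      rw [Finset.mem_range] at hj
      exact hcross j K (by omega) (by omega)
    have hT2 : 0 ≤ e * cross2 aa ww := by
      rw [hw, cross2_sum_right, Finset.mul_sum]
      apply Finset.sum_nonneg
      intro j hj
      rw [Finset.mem_range] at hj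
      exact hcross 0 j (Nat.zero_le _) (by omega)
    have hcram : ∀ i : Fin 2, cross2 aa bb * ww i = cross2 ww bb * aa i + cross2 aa ww * bb i := by
      intro i; fin_cases i <;> (simp [cross2]; try ring)
    refine ⟨(e * cross2 ww bb) / D, (e * cross2 aa ww) / D,
      div_nonneg hT1 hD.le, div_nonneg hT2 hD.le, ?_⟩
    ext i
    have key : (e * cross2 ww bb) / D * aa i + (e * cross2 aa ww) / D * bb i = ww i := by
      rw [div_mul_eq_mul_div, div_mul_eq_mul_div, ← add_div, div_eq_iff hD.ne']
      linear_combination (-e) * hcram i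
    have h1 : (v K - v (K+1)) i = -(bb i) := by simp [hbb, PiLp.sub_apply, PiLp.neg_apply]; try ring
    have h2 : ww i = v (K+1) i - v 0 i := by simp [hww, PiLp.sub_apply]
    have h3 : aa i = v 1 i - v 0 i := by simp [haa, PiLp.sub_apply]
    simp only [PiLp.add_apply, PiLp.smul_apply, smul_eq_mul]
    rw [h1]
    nlinarith [key, h2, h3]
  · -- degenerate (collinear) case
    obtain ⟨ρb, hρb, hb⟩ := hrep K (by omega)
    have he2 : e * e = 1 := by rcases he with rfl | rfl <;> norm_num
    have hΘK : Real.sin (Θ K) = 0 := by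
      have hcr2 := cross2_rot e 0 (Θ K) he (v 1 - v 0)
      rw [rot_zero, sub_zero] at hcr2
      have h0 : e * cross2 (v 1 - v 0) (v (K+1) - v K)
          = ρb * (Real.sin (Θ K) * ((v 1 - v 0) 0 ^ 2 + (v 1 - v 0) 1 ^ 2)) := by
        rw [hb, cross2_smul_right, hcr2]
        linear_combination (ρb * Real.sin (Θ K) * ((v 1 - v 0) 0 ^ 2 + (v 1 - v 0) 1 ^ 2)) * he2
      rw [← hD] at h0
      have := h0.symm
      rcases mul_eq_zero.mp this with h | h
      · exact absurd h hρb.ne'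
      · rcases mul_eq_zero.mp h with h' | h'
        · exact h'
        · exact absurd h' hq.ne'
    have hΘKzero : Θ K = 0 := by
      by_contra h
      have hpos : 0 < Θ K := by
        have := hmono (Nat.zero_le K); rw [hΘ0] at this
        exact lt_of_le_of_ne this (Ne.symm h)
      have hlt : Θ K < Real.pi := by
        have : Θ K ≤ Θ (K + 2 - 2) := le_of_eq rfl
        linarith [hbd]
      exact absurd hΘK (ne_of_gt (Real.sin_pos_of_pos_of_lt_pi hpos hlt))
    have hΘall : ∀ j, j ≤ K → Θ j = 0 := by
      intro j hj
      have h1 : Θ j ≤ Θ K := hmono hj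
      have h2 : Θ 0 ≤ Θ j := hmono (Nat.zero_le j)
      rw [hΘ0] at h2; rw [hΘKzero] at h1
      linarith
    have claim : ∀ m, m ≤ K + 1 →
        ∃ t : ℝ, 0 ≤ t ∧ ∑ j ∈ Finset.range m, (v (j+1) - v j) = t • (v 1 - v 0) := by
      intro m
      induction m with
      | zero => exact fun _ => ⟨0, le_refl 0, by simp⟩
      | succ m ih =>
        intro hm
        obtain ⟨t, ht0, hsum⟩ := ih (by omega)
        obtain ⟨ρ, hρ, hρrep⟩ := hrep m (by omega)
        have hstep : v (m+1) - v m = ρ • (v 1 - v 0) := by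
          rw [hρrep, hΘall m (by omega), rot_zero]
        exact ⟨t + ρ, by positivity,
          by rw [Finset.sum_range_succ, hsum, hstep, add_smul]⟩
    obtain ⟨t, ht0, hsum⟩ := claim (K+1) le_rfl
    refine ⟨t, 0, ht0, le_rfl, ?_⟩
    rw [zero_smul, add_zero, ← hsum, ← hw]
    abel

lemma CC_hull (e : ℝ) (he : e = 1 ∨ e = -1) (k : ℕ) (v : ℕ → Pt)
    (hd : ∀ i, i + 1 < k → v (i+1) - v i ≠ 0)
    (hcr : ∀ i, i + 2 < k → 0 ≤ e * cross2 (v (i+1) - v i) (v (i+2) - v (i+1)))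
    (ht : ∑ m ∈ Finset.range (k-2),
      (Real.pi - EuclideanGeometry.angle (v m) (v (m+1)) (v (m+2))) < Real.pi)
    (S : Set Pt)
    (hS1 : ∀ p ∈ S, ∃ m, m < k ∧ p = v m) (hS2 : ∀ m, m < k → v m ∈ S)
    (i : ℕ) (hi : i + 1 < k) (x : Pt) (hx : x ∈ segment ℝ (v i) (v (i+1))) :
    x ∈ frontier (convexHull ℝ S) := by
  have hcross := CC_cross e he k v hd hcr ht
  have hIco : ∀ m n, m ≤ n → v n - v m = ∑ j ∈ Finset.Ico m n, (v (j+1) - v j) := by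
    intro m n h
    rw [Finset.sum_Ico_eq_sub _ h, Finset.sum_range_sub, Finset.sum_range_sub]
    abel
  set a := v (i+1) - v i with ha
  set f : Pt → ℝ := fun u => e * cross2 a u with hf
  have hlin : IsLinearMap ℝ f := by
    constructor
    · intro p q; simp only [hf, cross2_add_right]; ring
    · intro c p; simp only [hf, cross2_smul_right, smul_eq_mul]; ring
  have hkey : ∀ m, m < k → f (v i) ≤ f (v m) := by
    intro m hm
    have hdiff : f (v m) - f (v i) = e * cross2 a (v m - v i) := by
      simp only [hf, cross2_sub_right]; ring
    rcases le_or_gt i m with h | h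
    · have h2 : 0 ≤ e * cross2 a (v m - v i) := by
        rw [hIco i m h, cross2_sum_right, Finset.mul_sum]
        apply Finset.sum_nonneg
        intro j hj
        rw [Finset.mem_Ico] at hj
        exact hcross i j hj.1 (by omega)
      linarith
    · have h2 : 0 ≤ e * cross2 a (v m - v i) := by
        have hmi : v m - v i = -(v i - v m) := by abel
        rw [hmi, hIco m i h.le]
        rw [show ∀ y : Pt, cross2 a (-y) = -cross2 a y from fun y => by
          simp [cross2, PiLp.neg_apply]; ring]
        rw [cross2_sum_right, ← Finset.sum_neg_distrib, Finset.mul_sum]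
        apply Finset.sum_nonneg
        intro j hj
        rw [Finset.mem_Ico] at hj
        have := hcross j i (by omega) (by omega)
        have hanti : cross2 a (v (j+1) - v j) = -cross2 (v (j+1) - v j) a := cross2_anti _ _
        rw [hanti]
        linarith [this]
      linarith
  have hhull_le : ∀ y ∈ convexHull ℝ S, f (v i) ≤ f y := by
    intro y hy
    have hsub : S ⊆ {y | f (v i) ≤ f y} := by
      intro p hp
      obtain ⟨m, hm, rfl⟩ := hS1 p hp
      exact hkey m hm
    exact convexHull_min hsub (convex_halfSpace_ge hlin (f (v i))) hy
  have hxhull : x ∈ convexHull ℝ S :=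
    (convex_convexHull ℝ S).segment_subset
      (subset_convexHull ℝ S (hS2 i (by omega)))
      (subset_convexHull ℝ S (hS2 (i+1) hi)) hx
  have hfx : f x = f (v i) := by
    obtain ⟨p, q, hp, hq, hpq, rfl⟩ := hx
    have h1 : f (v (i+1)) = f (v i) := by
      have hz : cross2 a a = 0 := by simp [cross2]; ring
      have h2 : cross2 a (v (i+1) - v i) = 0 := by rw [← ha]; exact hz
      rw [cross2_sub_right] at h2
      have h3 : cross2 a (v (i+1)) = cross2 a (v i) := by linarith
      simp only [hf, h3]
    rw [hlin.map_add, hlin.map_smul, hlin.map_smul, h1, smul_eq_mul, smul_eq_mul, ← add_mul, hpq,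
      one_mul]
  rw [frontier, Set.mem_diff]
  refine ⟨subset_closure hxhull, ?_⟩
  intro hint
  rw [mem_interior_iff_mem_nhds, Metric.mem_nhds_iff] at hint
  obtain ⟨δ, hδ, hball⟩ := hint
  set z : Pt := e • perp a with hz
  have hq : 0 < a 0 ^ 2 + a 1 ^ 2 := coordsq_pos (hd i hi)
  have hfz : f z = a 0 ^ 2 + a 1 ^ 2 := by
    rcases he with rfl | rfl <;>
      simp [hf, hz, cross2, PiLp.smul_apply, smul_eq_mul] <;> ring
  set c : ℝ := δ / (2 * (‖z‖ + 1)) with hc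
  have hcpos : 0 < c := by positivity
  have hymem : x - c • z ∈ ball x δ := by
    rw [mem_ball, dist_eq_norm]
    have : x - c • z - x = -(c • z) := by abel
    rw [this, norm_neg, norm_smul, Real.norm_eq_abs, abs_of_pos hcpos, hc]
    rw [div_mul_eq_mul_div, div_lt_iff₀ (by positivity)]
    nlinarith [norm_nonneg z, hδ]
  have hy_hull := hhull_le _ (hball hymem)
  have hfy : f (x - c • z) = f x - c * f z := by
    rw [hlin.map_sub, hlin.map_smul, smul_eq_mul]
  rw [hfy, hfx, hfz] at hy_hull
  nlinarith [hy_hull, hcpos, hq]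

end CCAux
namespace CCAux

lemma mem_to_getD (l : List Pt) (p : Pt) (hp : p ∈ l) : ∃ m, m < l.length ∧ p = l.getD m 0 := by
  obtain ⟨n, h, rfl⟩ := List.mem_iff_getElem.mp hp
  exact ⟨n, h, (List.getD_eq_getElem l 0 h).symm⟩

lemma getD_mem (l : List Pt) (m : ℕ) (hm : m < l.length) : l.getD m 0 ∈ l := by
  rw [List.getD_eq_getElem l 0 hm]
  exact List.getElem_mem hm

lemma zip_to_getD (l : List Pt) (p : Pt × Pt) (hp : p ∈ l.zip l.tail) :
    ∃ i, i + 1 < l.length ∧ p.1 = l.getD i 0 ∧ p.2 = l.getD (i+1) 0 := by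
  obtain ⟨n, h, rfl⟩ := List.mem_iff_getElem.mp hp
  have h1 : n + 1 < l.length := by
    have := h; simp [List.length_zip, List.length_tail] at this; omega
  refine ⟨n, h1, ?_, ?_⟩ <;>
    rw [List.getD_eq_getElem l 0 (by omega)] <;>
    simp [List.getElem_zip, List.getElem_tail]

lemma nodup_sub_ne (l : List Pt) (hl : l.Nodup) (i : ℕ) (h : i + 1 < l.length) :
    l.getD (i+1) 0 - l.getD i 0 ≠ 0 := by
  rw [List.getD_eq_getElem l 0 h, List.getD_eq_getElem l 0 (by omega), sub_ne_zero]
  intro hh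
  have := (List.Nodup.getElem_inj_iff hl).mp hh
  omega

end CCAux

/-- A convex polygonal chain whose total turning angle is strictly less than
180° is simplifiable: its two end rays intersect (and, being convex, it is hull-honest). -/
theorem convex_chain_simplifiable (l : List Pt) (hc : ConvexChain l)
    (ht : turningAngle l < Real.pi) : Simplifiable l := by
  obtain ⟨hnd, hk, hcr0⟩ := hc
  obtain ⟨e, he, hcr⟩ : ∃ e : ℝ, (e = 1 ∨ e = -1) ∧ ∀ i, i + 2 < l.length →
      0 ≤ e * cross2 (l.getD (i+1) 0 - l.getD i 0) (l.getD (i+2) 0 - l.getD (i+1) 0) := by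
    rcases hcr0 with h | h
    · exact ⟨1, Or.inl rfl, fun i hi => by simpa using h i hi⟩
    · exact ⟨-1, Or.inr rfl, fun i hi => by have := h i hi; linarith⟩
  have hd : ∀ i, i + 1 < l.length → l.getD (i+1) 0 - l.getD i 0 ≠ 0 :=
    fun i hi => CCAux.nodup_sub_ne l hnd i hi
  have htv : ∑ m ∈ Finset.range (l.length - 2),
      (Real.pi - EuclideanGeometry.angle (l.getD m 0) (l.getD (m+1) 0) (l.getD (m+2) 0))
        < Real.pi := ht
  refine ⟨hk, ?_, ?_⟩
  · -- HullHonest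
    intro x hx
    simp only [segChain, Set.mem_iUnion, exists_prop] at hx
    obtain ⟨p, hp, hxseg⟩ := hx
    obtain ⟨i, hi, h1, h2⟩ := CCAux.zip_to_getD l p hp
    refine CCAux.CC_hull e he l.length (fun m => l.getD m 0) hd hcr htv {x | x ∈ l}
      (fun p hp => CCAux.mem_to_getD l p hp)
      (fun m hm => CCAux.getD_mem l m hm) i hi x ?_
    rw [h1, h2] at hxseg
    exact hxseg
  · -- EndRaysMeet
    obtain ⟨K, hKeq⟩ : ∃ K, l.length = K + 2 := ⟨l.length - 2, by omega⟩
    have hd' : ∀ i, i + 1 < K + 2 → l.getD (i+1) 0 - l.getD i 0 ≠ 0 := hKeq ▸ hd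
    have hcr' : ∀ i, i + 2 < K + 2 →
        0 ≤ e * cross2 (l.getD (i+1) 0 - l.getD i 0) (l.getD (i+2) 0 - l.getD (i+1) 0) :=
      hKeq ▸ hcr
    have htv' : ∑ m ∈ Finset.range K,
        (Real.pi - EuclideanGeometry.angle (l.getD m 0) (l.getD (m+1) 0) (l.getD (m+2) 0))
          < Real.pi := by
      have : l.length - 2 = K := by omega
      rwa [this] at htv
    obtain ⟨t, s, ht0, hs0, heq⟩ :=
      CCAux.CC_rays e he K (fun m => l.getD m 0) hd' hcr' htv'
    refine ⟨l.getD 0 0 + t • (l.getD 1 0 - l.getD 0 0), ⟨t, ht0, rfl⟩, ⟨s, hs0, ?_⟩⟩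
    rw [hKeq]
    exact heq
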